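/- Let s ≥ 2, m ≥ 0, k ≥ 2 and 0 ≤ i ≤ min(2s+m−3, k−2). Then there is no pair (α,β) ∈ F_2^{s+k−1} × F_2^{s+m+k−1} such that simultaneously: rank M(s−1, s+m−1, k−1) = rank M(s, s+m−1, k−1) = rank M(s, s+m, k−1) = i and rank M(s−1, s+m−1, k) = rank M(s, s+m−1, k) = rank M(s, s+m, k) = i+1. -/

import Mathlib

open Matrix

/-- The submatrix `M(a', b', k')` of the double persymmetric matrix `D(α, β)`:
its rows are the first `a'` rows of the `α`-Hankel block and the first `b'` rows of the
`β`-Hankel block, and it keeps the first `k'` columns. -/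
def subMat (s m k a' b' k' : ℕ) (α : Fin (s + k - 1) → ZMod 2)
    (β : Fin (s + m + k - 1) → ZMod 2) :
    Matrix (Fin a' ⊕ Fin b') (Fin k') (ZMod 2) :=
  Matrix.of fun r j =>
    Sum.elim
      (fun i : Fin a' =>
        if h : (i : ℕ) + (j : ℕ) < s + k - 1 then α ⟨(i : ℕ) + (j : ℕ), h⟩ else 0)
      (fun i : Fin b' =>
        if h : (i : ℕ) + (j : ℕ) < s + m + k - 1 then β ⟨(i : ℕ) + (j : ℕ), h⟩ else 0) r

/-- The rank over `F_2` of the submatrix `M(a', b', k')`. -/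
noncomputable def subRank (s m k a' b' k' : ℕ) (α : Fin (s + k - 1) → ZMod 2)
    (β : Fin (s + m + k - 1) → ZMod 2) : ℕ :=
  (subMat s m k a' b' k' α β).rank


open Matrix Submodule Module

namespace RankJumpAux

variable (s m k : ℕ) (α : Fin (s + k - 1) → ZMod 2) (β : Fin (s + m + k - 1) → ZMod 2)

/-- value of the α sequence, extended by 0 -/
def valA (n : ℕ) : ZMod 2 := if h : n < s + k - 1 then α ⟨n, h⟩ else 0

def valB (n : ℕ) : ZMod 2 := if h : n < s + m + k - 1 then β ⟨n, h⟩ else 0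

/-- `n`-th row of the α-block, with all `k` columns -/
def rowA (n : ℕ) : Fin k → ZMod 2 := fun j => valA s k α (n + (j : ℕ))

def rowB (n : ℕ) : Fin k → ZMod 2 := fun j => valB s m k β (n + (j : ℕ))

def rset (a' b' : ℕ) : Set (Fin k → ZMod 2) :=
  (rowA s k α '' Set.Iio a') ∪ (rowB s m k β '' Set.Iio b')

/-- drop the last column -/
def Lmap : (Fin k → ZMod 2) →ₗ[ZMod 2] (Fin (k - 1) → ZMod 2) :=
  LinearMap.funLeft _ _ (Fin.castLE (Nat.sub_le k 1))

/-- drop the first column -/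
def Tmap : (Fin k → ZMod 2) →ₗ[ZMod 2] (Fin (k - 1) → ZMod 2) :=
  LinearMap.funLeft _ _ (fun j : Fin (k - 1) => ⟨(j : ℕ) + 1, by omega⟩)

theorem range_subMat (a' b' : ℕ) :
    Set.range (subMat s m k a' b' k α β) = rset s m k α β a' b' := by
  ext v
  constructor
  · rintro ⟨r, rfl⟩
    cases r with
    | inl i => exact Or.inl ⟨(i : ℕ), i.2, rfl⟩
    | inr i => exact Or.inr ⟨(i : ℕ), i.2, rfl⟩
  · rintro (⟨a, ha, rfl⟩ | ⟨b, hb, rfl⟩)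
    · exact ⟨Sum.inl ⟨a, ha⟩, rfl⟩
    · exact ⟨Sum.inr ⟨b, hb⟩, rfl⟩

theorem subMat_pred (a' b' : ℕ) (r : Fin a' ⊕ Fin b') :
    subMat s m k a' b' (k - 1) α β r = Lmap k (subMat s m k a' b' k α β r) := by
  funext j
  cases r <;> rfl

theorem range_subMat_pred (a' b' : ℕ) :
    Set.range (subMat s m k a' b' (k - 1) α β) = Lmap k '' rset s m k α β a' b' := by
  rw [← range_subMat s m k α β a' b']
  ext v
  constructor
  · rintro ⟨r, rfl⟩
    exact ⟨_, ⟨r, rfl⟩, (subMat_pred s m k α β a' b' r).symm⟩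
  · rintro ⟨_, ⟨r, rfl⟩, rfl⟩
    exact ⟨r, subMat_pred s m k α β a' b' r⟩

theorem subRank_eq (a' b' : ℕ) :
    subRank s m k a' b' k α β
      = finrank (ZMod 2) (span (ZMod 2) (rset s m k α β a' b')) := by
  rw [subRank, Matrix.rank_eq_finrank_span_row]
  change finrank (ZMod 2) (span (ZMod 2) (Set.range (subMat s m k a' b' k α β))) = _
  rw [range_subMat]

theorem subRank_pred_eq (a' b' : ℕ) :
    subRank s m k a' b' (k - 1) α β
      = finrank (ZMod 2) (Submodule.map (Lmap k) (span (ZMod 2) (rset s m k α β a' b'))) := by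
  rw [subRank, Matrix.rank_eq_finrank_span_row]
  change finrank (ZMod 2) (span (ZMod 2) (Set.range (subMat s m k a' b' (k - 1) α β))) = _
  rw [range_subMat_pred, Submodule.span_image]

theorem shiftA (n : ℕ) : Tmap k (rowA s k α n) = Lmap k (rowA s k α (n + 1)) := by
  funext j
  show rowA s k α n ⟨(j : ℕ) + 1, _⟩ = rowA s k α (n + 1) (Fin.castLE _ j)
  simp only [rowA, Fin.coe_castLE]
  congr 1
  omega

theorem shiftB (n : ℕ) : Tmap k (rowB s m k β n) = Lmap k (rowB s m k β (n + 1)) := by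
  funext j
  show rowB s m k β n ⟨(j : ℕ) + 1, _⟩ = rowB s m k β (n + 1) (Fin.castLE _ j)
  simp only [rowB, Fin.coe_castLE]
  congr 1
  omega

end RankJumpAux

open RankJumpAux Submodule Module in
theorem no_simultaneous_rank_jump (s m k i : ℕ) (hs : 2 ≤ s) (hk : 2 ≤ k)
    (hi : i ≤ min (2 * s + m - 3) (k - 2)) :
    ¬ ∃ (α : Fin (s + k - 1) → ZMod 2) (β : Fin (s + m + k - 1) → ZMod 2),
      subRank s m k (s - 1) (s + m - 1) (k - 1) α β = i ∧
      subRank s m k s (s + m - 1) (k - 1) α β = i ∧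
      subRank s m k s (s + m) (k - 1) α β = i ∧
      subRank s m k (s - 1) (s + m - 1) k α β = i + 1 ∧
      subRank s m k s (s + m - 1) k α β = i + 1 ∧
      subRank s m k s (s + m) k α β = i + 1 := by
  rintro ⟨α, β, h1, -, -, h4, -, h6⟩
  have hik : i + 1 ≤ k - 1 := by omega
  set W : Submodule (ZMod 2) (Fin k → ZMod 2) :=
    span (ZMod 2) (rset s m k α β (s - 1) (s + m - 1)) with hWdef
  rw [subRank_eq] at h4 h6
  rw [subRank_pred_eq] at h1
  rw [← hWdef] at h1 h4
  -- the big span equals W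
  have hle : W ≤ span (ZMod 2) (rset s m k α β s (s + m)) := by
    apply span_mono
    exact Set.union_subset_union
      (Set.image_mono (Set.Iio_subset_Iio (by omega)))
      (Set.image_mono (Set.Iio_subset_Iio (by omega)))
  have hWeq : W = span (ZMod 2) (rset s m k α β s (s + m)) :=
    Submodule.eq_of_le_of_finrank_le hle (by rw [h6, ← h4])
  have hrowA : ∀ a, a < s → rowA s k α a ∈ W := by
    intro a ha
    rw [hWeq]
    exact subset_span (Or.inl ⟨a, ha, rfl⟩)
  have hrowB : ∀ b, b < s + m → rowB s m k β b ∈ W := by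
    intro b hb
    rw [hWeq]
    exact subset_span (Or.inr ⟨b, hb, rfl⟩)
  -- the vector supported on the last coordinate is in W
  have hker : ∃ v, v ∈ W ∧ v ≠ 0 ∧ Lmap k v = 0 := by
    set φ : W →ₗ[ZMod 2] (Fin (k - 1) → ZMod 2) := (Lmap k).comp W.subtype with hφ
    have hrange : LinearMap.range φ = Submodule.map (Lmap k) W := by
      rw [hφ, LinearMap.range_comp, Submodule.range_subtype]
    have hrn := LinearMap.finrank_range_add_finrank_ker φ
    rw [hrange] at hrn
    rw [h1, h4] at hrn
    have : 0 < finrank (ZMod 2) (LinearMap.ker φ) := by omega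
    obtain ⟨x, hx0⟩ := Module.finrank_pos_iff_exists_ne_zero.mp this
    refine ⟨(x.1 : Fin k → ZMod 2), x.1.2, ?_, ?_⟩
    · intro h
      exact hx0 (Subtype.ext (Subtype.ext h))
    · exact x.2
  obtain ⟨v, hvW, hv0, hvL⟩ := hker
  have hvz : ∀ j : Fin k, (j : ℕ) < k - 1 → v j = 0 := by
    intro j hj
    have := congrFun hvL ⟨(j : ℕ), hj⟩
    simpa [Lmap, Fin.ext_iff] using this
  have hne1 : ∀ a : ZMod 2, a ≠ 0 → a = 1 := by decide
  have hvlast : v ⟨k - 1, by omega⟩ = 1 := by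
    apply hne1
    intro hlast
    apply hv0
    funext j
    rcases Nat.lt_or_ge (j : ℕ) (k - 1) with h | h
    · exact hvz j h
    · have hjk := j.2
      have : j = ⟨k - 1, by omega⟩ := Fin.ext (show (j : ℕ) = k - 1 by omega)
      rw [this]; exact hlast
  -- shift: T of W lands in L of W
  have hTL : Submodule.map (Tmap k) W ≤ Submodule.map (Lmap k) W := by
    rw [hWdef, Submodule.map_span]
    apply span_le.2
    rintro _ ⟨x, hx, rfl⟩
    rcases hx with ⟨a, ha, rfl⟩ | ⟨b, hb, rfl⟩
    · rw [shiftA]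
      have ha' : a < s - 1 := ha
      exact ⟨rowA s k α (a + 1), hrowA _ (by omega), rfl⟩
    · rw [shiftB]
      have hb' : b < s + m - 1 := hb
      exact ⟨rowB s m k β (b + 1), hrowB _ (by omega), rfl⟩
  -- main induction producing echelon vectors in W
  have key : ∀ t, t ≤ k - 1 → ∃ w, w ∈ W ∧ (∀ j : Fin k, (j : ℕ) < k - 1 - t → w j = 0) ∧
      (∀ j : Fin k, (j : ℕ) = k - 1 - t → w j = 1) := by
    intro t
    induction t with
    | zero =>
      intro _
      refine ⟨v, hvW, ?_, ?_⟩
      · intro j hj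
        exact hvz j (by omega)
      · intro j hj
        have : j = ⟨k - 1, by omega⟩ := Fin.ext (show (j : ℕ) = k - 1 by omega)
        rw [this]; exact hvlast
    | succ t ih =>
      intro ht
      obtain ⟨w, hwW, hw0, hw1⟩ := ih (by omega)
      obtain ⟨w', hw'W, hww'⟩ := hTL (Submodule.mem_map_of_mem (f := Tmap k) hwW)
      have hcomp : ∀ j : Fin k, (hj : (j : ℕ) < k - 1) → w' j = w ⟨(j : ℕ) + 1, by omega⟩ := by
        intro j hj
        have := congrFun hww' ⟨(j : ℕ), hj⟩
        simpa [Lmap, Tmap, Fin.ext_iff] using this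
      refine ⟨w', hw'W, ?_, ?_⟩
      · intro j hj
        rw [hcomp j (by omega)]
        exact hw0 _ (by simp; omega)
      · intro j hj
        rw [hcomp j (by omega)]
        exact hw1 _ (by simp; omega)
  -- echelon family indexed by pivots
  have hu : ∀ p : Fin k, ∃ w, w ∈ W ∧ (∀ j : Fin k, (j : ℕ) < (p : ℕ) → w j = 0) ∧
      (∀ j : Fin k, (j : ℕ) = (p : ℕ) → w j = 1) := by
    intro p
    obtain ⟨w, hwW, hw0, hw1⟩ := key (k - 1 - (p : ℕ)) (by omega)
    have hp : k - 1 - (k - 1 - (p : ℕ)) = (p : ℕ) := by omega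
    rw [hp] at hw0 hw1
    exact ⟨w, hwW, hw0, hw1⟩
  choose u huW hu0 hu1 using hu
  have hUtri : (Matrix.of u).BlockTriangular id := by
    intro p j hpj
    exact hu0 p j hpj
  have hdet : (Matrix.of u).det = 1 := by
    rw [Matrix.det_of_upperTriangular hUtri]
    have : ∀ p : Fin k, Matrix.of u p p = 1 := fun p => hu1 p p rfl
    simp [this]
  have hUnit : IsUnit (Matrix.of u) := by
    rw [Matrix.isUnit_iff_isUnit_det, hdet]
    exact isUnit_one
  have hli : LinearIndependent (ZMod 2) u :=
    Matrix.linearIndependent_rows_iff_isUnit.mpr hUnit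
  have hspan : span (ZMod 2) (Set.range u) ≤ W :=
    span_le.2 (Set.range_subset_iff.2 huW)
  have hcard : finrank (ZMod 2) (span (ZMod 2) (Set.range u)) = k := by
    rw [finrank_span_eq_card hli, Fintype.card_fin]
  have hk_le := Submodule.finrank_mono (t := W) hspan
  rw [hcard, h4] at hk_le
  omega
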